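/- Let π be a bounded probability density on [0,1], let λ, K₁, B₁, B₂, K₂, α be positive reals, and set ρ = λ·K₁·B₁; assume ρ < 1. Suppose f : [0,1]² → ℝ is integrable and satisfies, for all x, y ∈ [0,1], [ρ·π(y) + 1−ρ]·f(x,y) = ρ·∫*_{u=x}^{y} [ρ·π(u) + 1−ρ]·( π(y)·f(x,u) + π(x)·f(y,u) ) du + λ·K₁·π(x)·( α·∫*_{u=x}^{y} [ρ·π(u) + 1−ρ] du + (ρ·B₂/(2B₁))·π(y) + B₁·π(y)·(K₂/K₁)·∫*_{u=x}^{y} [ρ·π(u) + 1−ρ] du ). Then ∫_0^1 ∫_0^1 [ρ·π(u) + 1−ρ]·f(x,u) dx du = (λ·K₁/(2(1−ρ)))·( α + λ·K₁·B₂ + B₁·K₂/K₁ ). -/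

import Mathlib

open MeasureTheory

/-- Circular integral: `∫*_{u=a}^{b} h(u) du` on the circle `[0,1)`.
It equals `∫_a^b h` if `a ≤ b` and `∫_a^1 h + ∫_0^b h` if `a > b`. -/
noncomputable def cint (a b : ℝ) (h : ℝ → ℝ) : ℝ :=
  if a ≤ b then ∫ u in a..b, h u
  else (∫ u in a..(1 : ℝ), h u) + ∫ u in (0 : ℝ)..b, h u

set_option maxHeartbeats 1000000

lemma ii_of_Ioc01 {h' : ℝ → ℝ} (hh : IntegrableOn h' (Set.Ioc 0 1))
    {a b : ℝ} (ha0 : 0 ≤ a) (ha1 : a ≤ 1) (hb0 : 0 ≤ b) (hb1 : b ≤ 1) :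
    IntervalIntegrable h' volume a b := by
  rw [intervalIntegrable_iff]
  exact hh.mono_set (Set.Ioc_subset_Ioc (le_inf ha0 hb0) (sup_le ha1 hb1))

lemma cint_add_cint_aux {h' : ℝ → ℝ} (hh : IntegrableOn h' (Set.Ioc 0 1))
    {x y : ℝ} (hx0 : 0 ≤ x) (hy1 : y ≤ 1) (hlt : x < y) :
    cint x y h' + cint y x h' = ∫ u in (0:ℝ)..1, h' u := by
  have hx1 : x ≤ 1 := hlt.le.trans hy1
  have hy0 : 0 ≤ y := hx0.trans hlt.le
  have i1 : IntervalIntegrable h' volume 0 x := ii_of_Ioc01 hh le_rfl zero_le_one hx0 hx1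
  have i2 : IntervalIntegrable h' volume x y := ii_of_Ioc01 hh hx0 hx1 hy0 hy1
  have i3 : IntervalIntegrable h' volume y 1 := ii_of_Ioc01 hh hy0 hy1 zero_le_one le_rfl
  have i12 : IntervalIntegrable h' volume 0 y := ii_of_Ioc01 hh le_rfl zero_le_one hy0 hy1
  have e1 := intervalIntegral.integral_add_adjacent_intervals i1 i2
  have e2 := intervalIntegral.integral_add_adjacent_intervals i12 i3
  unfold cint
  rw [if_pos hlt.le, if_neg (not_le.mpr hlt)]
  linarith

lemma cint_add_cint {h' : ℝ → ℝ} (hh : IntegrableOn h' (Set.Ioc 0 1))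
    {x y : ℝ} (hx : x ∈ Set.Icc (0:ℝ) 1) (hy : y ∈ Set.Icc (0:ℝ) 1) (hxy : x ≠ y) :
    cint x y h' + cint y x h' = ∫ u in (0:ℝ)..1, h' u := by
  rcases hxy.lt_or_gt with hlt | hlt
  · exact cint_add_cint_aux hh hx.1 hy.2 hlt
  · rw [add_comm]; exact cint_add_cint_aux hh hy.1 hx.2 hlt

lemma cint_eq {φ : ℝ → ℝ} (hφ : IntegrableOn φ (Set.Ioc 0 1))
    {x y : ℝ} (hx : x ∈ Set.Icc (0:ℝ) 1) (hy : y ∈ Set.Icc (0:ℝ) 1) :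
    cint x y φ = (∫ u in (0:ℝ)..y, φ u) - (∫ u in (0:ℝ)..x, φ u)
      + (if x ≤ y then 0 else ∫ u in (0:ℝ)..1, φ u) := by
  have i0x : IntervalIntegrable φ volume 0 x := ii_of_Ioc01 hφ le_rfl zero_le_one hx.1 hx.2
  have i0y : IntervalIntegrable φ volume 0 y := ii_of_Ioc01 hφ le_rfl zero_le_one hy.1 hy.2
  have ix1 : IntervalIntegrable φ volume x 1 := ii_of_Ioc01 hφ hx.1 hx.2 zero_le_one le_rfl
  unfold cint
  by_cases hxy : x ≤ y
  · rw [if_pos hxy, if_pos hxy, ← intervalIntegral.integral_interval_sub_left i0y i0x]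
    ring
  · rw [if_neg hxy, if_neg hxy]
    have e := intervalIntegral.integral_add_adjacent_intervals i0x ix1
    linarith

noncomputable def Pim (π : ℝ → ℝ) (t : ℝ) : ℝ :=
  ∫ u in Set.Ioc (0:ℝ) 1, (if u ≤ t then π u else 0)

noncomputable def Cfm (ρ : ℝ) (π : ℝ → ℝ) (a b : ℝ) : ℝ :=
  ρ * (Pim π b - Pim π a) + (1 - ρ) * (b - a) + (if a ≤ b then 0 else 1)

noncomputable def Gfm (ρ : ℝ) (π : ℝ → ℝ) (f : ℝ → ℝ → ℝ) (x : ℝ) : ℝ :=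
  ∫ u in Set.Ioc (0:ℝ) 1, (ρ * π u + (1 - ρ)) * f x u

lemma Pim_measurable {π : ℝ → ℝ} (hπ : Measurable π) : Measurable (Pim π) := by
  have hm : StronglyMeasurable (fun q : ℝ × ℝ => if q.2 ≤ q.1 then π q.2 else 0) :=
    (Measurable.ite (measurableSet_le measurable_snd measurable_fst)
      (hπ.comp measurable_snd) measurable_const).stronglyMeasurable
  exact (hm.integral_prod_right').measurable

lemma Cfm_measurable {ρ : ℝ} {π : ℝ → ℝ} (hπ : Measurable π) :
    Measurable (fun p : ℝ × ℝ => Cfm ρ π p.1 p.2) := by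
  have hPi := Pim_measurable hπ
  unfold Cfm
  exact ((((hPi.comp measurable_snd).sub (hPi.comp measurable_fst)).const_mul ρ).add
    (((measurable_snd.sub measurable_fst)).const_mul (1 - ρ))).add
    (Measurable.ite (measurableSet_le measurable_fst measurable_snd) measurable_const
      measurable_const)

lemma meas_univ_eq : ((volume.restrict (Set.Ioc (0:ℝ) 1)) Set.univ).toReal = 1 := by
  rw [Measure.restrict_apply_univ, Real.volume_Ioc]
  norm_num

lemma Pim_bound {π : ℝ → ℝ} {M : ℝ} (hM0 : 0 ≤ M)
    (hM : ∀ᵐ u ∂(volume.restrict (Set.Ioc (0:ℝ) 1)), |π u| ≤ M) (t : ℝ) :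
    |Pim π t| ≤ M := by
  have h := norm_integral_le_of_norm_le_const (μ := volume.restrict (Set.Ioc (0:ℝ) 1))
    (f := fun u => if u ≤ t then π u else 0) (C := M) ?_
  · rw [Real.norm_eq_abs] at h
    calc |Pim π t| ≤ M * ((volume.restrict (Set.Ioc (0:ℝ) 1)) Set.univ).toReal := h
    _ = M := by rw [meas_univ_eq, mul_one]
  · filter_upwards [hM] with u hu
    rw [Real.norm_eq_abs]
    split
    · exact hu
    · simpa using hM0

lemma Pim_eq {π : ℝ → ℝ} {t : ℝ} (ht : t ∈ Set.Icc (0:ℝ) 1) :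
    Pim π t = ∫ u in (0:ℝ)..t, π u := by
  rw [intervalIntegral.integral_of_le ht.1]
  unfold Pim
  have h1 : (fun u => if u ≤ t then π u else 0) = Set.indicator (Set.Iic t) π := by
    funext u; simp [Set.indicator_apply, Set.mem_Iic]
  rw [h1, integral_indicator measurableSet_Iic]
  have h2 : Set.Iic t ∩ Set.Ioc (0:ℝ) 1 = Set.Ioc 0 t := by
    ext u
    simp only [Set.mem_inter_iff, Set.mem_Iic, Set.mem_Ioc]
    exact ⟨fun ⟨a, b, _⟩ => ⟨b, a⟩, fun ⟨b, a⟩ => ⟨a, b, a.trans ht.2⟩⟩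
  rw [Measure.restrict_restrict measurableSet_Iic, h2]

lemma ind_le_eq {x : ℝ} (hx : x ∈ Set.Ioc (0:ℝ) 1) :
    (∫ y in Set.Ioc (0:ℝ) 1, (if y ≤ x then (1:ℝ) else 0)) = x := by
  have h1 : (fun y : ℝ => if y ≤ x then (1:ℝ) else 0)
      = Set.indicator (Set.Iic x) (fun _ => (1:ℝ)) := by
    funext u; simp [Set.indicator_apply, Set.mem_Iic]
  rw [h1, integral_indicator measurableSet_Iic]
  rw [setIntegral_const, measureReal_restrict_apply measurableSet_Iic]
  have h2 : Set.Iic x ∩ Set.Ioc (0:ℝ) 1 = Set.Ioc 0 x := by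
    ext u
    simp only [Set.mem_inter_iff, Set.mem_Iic, Set.mem_Ioc]
    exact ⟨fun ⟨a, b, _⟩ => ⟨b, a⟩, fun ⟨b, a⟩ => ⟨a, b, a.trans hx.2⟩⟩
  rw [h2, Real.volume_real_Ioc, smul_eq_mul, mul_one, max_eq_left (by linarith [hx.1])]
  ring

lemma ind_gt_eq {x : ℝ} (hx : x ∈ Set.Ioc (0:ℝ) 1) :
    (∫ y in Set.Ioc (0:ℝ) 1, (if x ≤ y then (0:ℝ) else 1)) = x := by
  have h1 : (fun y : ℝ => if x ≤ y then (0:ℝ) else 1)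
      = Set.indicator (Set.Iio x) (fun _ => (1:ℝ)) := by
    funext u
    by_cases h : x ≤ u
    · simp [Set.indicator_apply, h, not_lt.mpr h]
    · simp [Set.indicator_apply, h, lt_of_not_ge h]
  rw [h1, integral_indicator measurableSet_Iio]
  rw [setIntegral_const, measureReal_restrict_apply measurableSet_Iio]
  have h2 : Set.Iio x ∩ Set.Ioc (0:ℝ) 1 = Set.Ioo 0 x := by
    ext u
    simp only [Set.mem_inter_iff, Set.mem_Iio, Set.mem_Ioo, Set.mem_Ioc]
    exact ⟨fun ⟨a, b, _⟩ => ⟨b, a⟩, fun ⟨b, a⟩ => ⟨a, b, a.le.trans hx.2⟩⟩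
  rw [h2, Real.volume_real_Ioo, smul_eq_mul, mul_one, max_eq_left (by linarith [hx.1])]
  ring

lemma int_id_half : (∫ y in Set.Ioc (0:ℝ) 1, y) = 1/2 := by
  rw [← intervalIntegral.integral_of_le zero_le_one]
  simp

noncomputable def muP : Measure (ℝ × ℝ) :=
  (volume.restrict (Set.Ioc (0:ℝ) 1)).prod (volume.restrict (Set.Ioc (0:ℝ) 1))

instance : IsFiniteMeasure (volume.restrict (Set.Ioc (0:ℝ) 1)) := by
  constructor
  rw [Measure.restrict_apply_univ, Real.volume_Ioc]
  simp

instance : IsFiniteMeasure muP := by unfold muP; infer_instance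

lemma wP_prod {F : ℝ × ℝ → ℝ} (hF : Integrable F muP) :
    ∫ p, F p ∂muP = ∫ x in Set.Ioc (0:ℝ) 1, ∫ y in Set.Ioc (0:ℝ) 1, F (x, y) :=
  integral_prod F hF

lemma wP_symm {F : ℝ × ℝ → ℝ} (hF : Integrable F muP) :
    ∫ p, F p ∂muP = ∫ y in Set.Ioc (0:ℝ) 1, ∫ x in Set.Ioc (0:ℝ) 1, F (x, y) :=
  integral_prod_symm F hF

lemma wP_swap (F : ℝ × ℝ → ℝ) :
    ∫ p, F (p.2, p.1) ∂muP = ∫ p, F p ∂muP :=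
  integral_prod_swap F

lemma wP_swap_int {F : ℝ × ℝ → ℝ} (hF : Integrable F muP) :
    Integrable (fun p : ℝ × ℝ => F (p.2, p.1)) muP :=
  hF.swap

lemma wP_mul (φ ψ : ℝ → ℝ) :
    ∫ p, φ p.1 * ψ p.2 ∂muP
      = (∫ x in Set.Ioc (0:ℝ) 1, φ x) * ∫ y in Set.Ioc (0:ℝ) 1, ψ y :=
  integral_prod_mul φ ψ

lemma wP_mul_int {φ ψ : ℝ → ℝ}
    (hφ : Integrable φ (volume.restrict (Set.Ioc (0:ℝ) 1)))
    (hψ : Integrable ψ (volume.restrict (Set.Ioc (0:ℝ) 1))) :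
    Integrable (fun p : ℝ × ℝ => φ p.1 * ψ p.2) muP :=
  hφ.mul_prod hψ

lemma wP_sections {F : ℝ × ℝ → ℝ} (hF : Integrable F muP) :
    ∀ᵐ x ∂(volume.restrict (Set.Ioc (0:ℝ) 1)),
      Integrable (fun y => F (x, y)) (volume.restrict (Set.Ioc (0:ℝ) 1)) :=
  hF.prod_right_ae

lemma wP_int_left {F : ℝ × ℝ → ℝ} (hF : Integrable F muP) :
    Integrable (fun x => ∫ y in Set.Ioc (0:ℝ) 1, F (x, y))
      (volume.restrict (Set.Ioc (0:ℝ) 1)) :=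
  hF.integral_prod_left

lemma wP_fst {Q : ℝ → Prop} (hQ : ∀ᵐ x ∂(volume.restrict (Set.Ioc (0:ℝ) 1)), Q x) :
    ∀ᵐ p ∂muP, Q p.1 := by
  rw [ae_iff] at hQ ⊢
  refine measure_mono_null (t := {x | ¬ Q x} ×ˢ (Set.univ : Set ℝ))
    (fun p hp => Set.mem_prod.mpr ⟨hp, Set.mem_univ _⟩) ?_
  rw [muP, Measure.prod_prod, hQ, zero_mul]

lemma wP_snd {Q : ℝ → Prop} (hQ : ∀ᵐ x ∂(volume.restrict (Set.Ioc (0:ℝ) 1)), Q x) :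
    ∀ᵐ p ∂muP, Q p.2 := by
  rw [ae_iff] at hQ ⊢
  refine measure_mono_null (t := (Set.univ : Set ℝ) ×ˢ {x | ¬ Q x})
    (fun p hp => Set.mem_prod.mpr ⟨Set.mem_univ _, hp⟩) ?_
  rw [muP, Measure.prod_prod, hQ, mul_zero]

lemma wP_diag : ∀ᵐ p ∂muP, p.1 ≠ p.2 := by
  rw [ae_iff]
  have hs : MeasurableSet {p : ℝ × ℝ | p.1 = p.2} :=
    measurableSet_eq_fun measurable_fst measurable_snd
  have h0 : muP {p : ℝ × ℝ | p.1 = p.2} = 0 := by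
    rw [muP, Measure.prod_apply hs]
    have hz : ∀ x : ℝ, (volume.restrict (Set.Ioc (0:ℝ) 1))
        (Prod.mk x ⁻¹' {p : ℝ × ℝ | p.1 = p.2}) = 0 := by
      intro x
      have he : (Prod.mk x ⁻¹' {p : ℝ × ℝ | p.1 = p.2}) = {x} := by
        ext y; simp [eq_comm]
      rw [he, Measure.restrict_apply (measurableSet_singleton x)]
      exact measure_mono_null Set.inter_subset_left Real.volume_singleton
    simp [hz]
  have he : {a : ℝ × ℝ | ¬ a.1 ≠ a.2} = {p : ℝ × ℝ | p.1 = p.2} := by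
    ext p; simp [not_not]
  rw [he]
  exact h0

lemma wP_bint {F : ℝ × ℝ → ℝ} {C : ℝ} (hm : AEStronglyMeasurable F muP)
    (hb : ∀ᵐ p ∂muP, |F p| ≤ C) : Integrable F muP :=
  Integrable.mono' (integrable_const C) hm (hb.mono fun p h => by rwa [Real.norm_eq_abs])

lemma w_bint {φ : ℝ → ℝ} {C : ℝ} (hm : AEStronglyMeasurable φ (volume.restrict (Set.Ioc (0:ℝ) 1)))
    (hb : ∀ᵐ u ∂(volume.restrict (Set.Ioc (0:ℝ) 1)), |φ u| ≤ C) :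
    Integrable φ (volume.restrict (Set.Ioc (0:ℝ) 1)) :=
  Integrable.mono' (integrable_const C) hm (hb.mono fun p h => by rwa [Real.norm_eq_abs])

lemma wP_swap_int2 {F G : ℝ × ℝ → ℝ} (hF : Integrable F muP)
    (hFG : ∀ p : ℝ × ℝ, G p = F (p.2, p.1)) : Integrable G muP :=
  hF.swap.congr (Filter.Eventually.of_forall fun p => (hFG p).symm)

lemma wP_swap_eq (F G : ℝ × ℝ → ℝ) (hFG : ∀ p : ℝ × ℝ, G p = F (p.2, p.1)) :
    ∫ p, G p ∂muP = ∫ p, F p ∂muP := by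
  rw [show G = fun p => F (p.2, p.1) from funext hFG]
  exact integral_prod_swap F

/-- Any integrable solution `f` of the full integral equation for the mean
customer-spread function yields the correct mean number of waiting customers:
`∫_0^1 ∫_0^1 [ρπ(u)+1−ρ]·f(x,u) dx du
  = (λK₁/(2(1−ρ)))·(α + λK₁B₂ + B₁K₂/K₁)`. -/
theorem integral_equation_gives_mean_queue_length
    (π : ℝ → ℝ) (hπmeas : Measurable π)
    (hπnn : ∀ x ∈ Set.Icc (0 : ℝ) 1, 0 ≤ π x)
    (hπbd : ∃ M : ℝ, ∀ x ∈ Set.Icc (0 : ℝ) 1, π x ≤ M)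
    (hπint : (∫ u in (0 : ℝ)..1, π u) = 1)
    (lam K₁ B₁ B₂ K₂ α ρ : ℝ)
    (hlam : 0 < lam) (hK₁ : 0 < K₁) (hB₁ : 0 < B₁) (hB₂ : 0 < B₂)
    (hK₂ : 0 < K₂) (hα : 0 < α)
    (hρdef : ρ = lam * K₁ * B₁) (hρ1 : ρ < 1)
    (f : ℝ → ℝ → ℝ)
    (hfint : IntegrableOn (Function.uncurry f)
      (Set.Icc (0 : ℝ) 1 ×ˢ Set.Icc (0 : ℝ) 1))
    (heq : ∀ x ∈ Set.Icc (0 : ℝ) 1, ∀ y ∈ Set.Icc (0 : ℝ) 1,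
      (ρ * π y + (1 - ρ)) * f x y
        = ρ * cint x y (fun u => (ρ * π u + (1 - ρ)) * (π y * f x u + π x * f y u))
          + lam * K₁ * π x *
            (α * cint x y (fun u => ρ * π u + (1 - ρ))
              + ρ * B₂ / (2 * B₁) * π y
              + B₁ * π y * (K₂ / K₁) * cint x y (fun u => ρ * π u + (1 - ρ)))) :
    (∫ u in (0 : ℝ)..1, ∫ x in (0 : ℝ)..1, (ρ * π u + (1 - ρ)) * f x u)
      = lam * K₁ / (2 * (1 - ρ)) * (α + lam * K₁ * B₂ + B₁ * K₂ / K₁) := by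
  classical
  obtain ⟨M₀, hM₀⟩ := hπbd
  set M : ℝ := max M₀ 0 with hMdef
  have hM0 : 0 ≤ M := le_max_right _ _
  have hπM : ∀ x ∈ Set.Icc (0:ℝ) 1, |π x| ≤ M := fun x hx => by
    rw [abs_of_nonneg (hπnn x hx)]
    exact (hM₀ x hx).trans (le_max_left _ _)
  have hρ0 : 0 < ρ := by rw [hρdef]; positivity
  have haemem : ∀ᵐ u ∂(volume.restrict (Set.Ioc (0:ℝ) 1)), u ∈ Set.Ioc (0:ℝ) 1 :=
    ae_restrict_mem measurableSet_Ioc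
  have hπae : ∀ᵐ u ∂(volume.restrict (Set.Ioc (0:ℝ) 1)), |π u| ≤ M :=
    haemem.mono fun u hu => hπM u (Set.Ioc_subset_Icc_self hu)
  have hπμ : Integrable π (volume.restrict (Set.Ioc (0:ℝ) 1)) :=
    w_bint hπmeas.aestronglyMeasurable hπae
  have hπIoc : IntegrableOn π (Set.Ioc 0 1) := hπμ
  have hπ1 : (∫ u in Set.Ioc (0:ℝ) 1, π u) = 1 := by
    rw [intervalIntegral.integral_of_le zero_le_one] at hπint; exact hπint
  have hμuniv : ((volume.restrict (Set.Ioc (0:ℝ) 1)) Set.univ).toReal = 1 := meas_univ_eq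
  -- facts about h := fun u => ρ * π u + (1 - ρ)
  have hhmeas : Measurable (fun u => ρ * π u + (1 - ρ)) := (hπmeas.const_mul ρ).add_const _
  have hhae : ∀ᵐ u ∂(volume.restrict (Set.Ioc (0:ℝ) 1)),
      |ρ * π u + (1 - ρ)| ≤ ρ * M + |1 - ρ| := by
    filter_upwards [hπae] with u hu
    calc |ρ * π u + (1 - ρ)| ≤ |ρ * π u| + |1 - ρ| := abs_add_le _ _
      _ ≤ ρ * M + |1 - ρ| := by
          rw [abs_mul, abs_of_nonneg hρ0.le]
          nlinarith
  have hhμ : Integrable (fun u => ρ * π u + (1 - ρ)) (volume.restrict (Set.Ioc (0:ℝ) 1)) :=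
    w_bint hhmeas.aestronglyMeasurable hhae
  have hhIoc : IntegrableOn (fun u => ρ * π u + (1 - ρ)) (Set.Ioc 0 1) := hhμ
  -- Pim facts
  have hPib : ∀ t, |Pim π t| ≤ M := Pim_bound hM0 hπae
  have hPimeas := Pim_measurable hπmeas
  have hPiμ : Integrable (Pim π) (volume.restrict (Set.Ioc (0:ℝ) 1)) :=
    w_bint hPimeas.aestronglyMeasurable (Filter.Eventually.of_forall hPib)
  have hPi1 : Pim π 1 = 1 := by
    rw [Pim_eq (Set.mem_Icc.mpr ⟨zero_le_one, le_rfl⟩)]; exact hπint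
  set S : ℝ := ∫ t in Set.Ioc (0:ℝ) 1, Pim π t with hSdef
  -- primitive formula
  have hH : ∀ t ∈ Set.Icc (0:ℝ) 1,
      (∫ u in (0:ℝ)..t, (ρ * π u + (1 - ρ))) = ρ * Pim π t + (1 - ρ) * t := by
    intro t ht
    have iπ : IntervalIntegrable π volume 0 t := ii_of_Ioc01 hπIoc le_rfl zero_le_one ht.1 ht.2
    rw [intervalIntegral.integral_add (iπ.const_mul ρ) (intervalIntegrable_const),
      intervalIntegral.integral_const_mul, intervalIntegral.integral_const, ← Pim_eq ht]
    rw [smul_eq_mul]; ring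
  have hcinth : ∀ a ∈ Set.Icc (0:ℝ) 1, ∀ b ∈ Set.Icc (0:ℝ) 1,
      cint a b (fun u => ρ * π u + (1 - ρ)) = Cfm ρ π a b := by
    intro a ha b hb
    rw [cint_eq hhIoc ha hb, hH b hb, hH a ha, hH 1 (Set.mem_Icc.mpr ⟨zero_le_one, le_rfl⟩), hPi1]
    unfold Cfm
    by_cases hab : a ≤ b
    · rw [if_pos hab, if_pos hab]; ring
    · rw [if_neg hab, if_neg hab]; ring
  have hCsum : ∀ a b : ℝ, a ≠ b → Cfm ρ π a b + Cfm ρ π b a = 1 := by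
    intro a b hab
    unfold Cfm
    rcases hab.lt_or_gt with h | h
    · rw [if_pos h.le, if_neg (not_le.mpr h)]; ring
    · rw [if_neg (not_le.mpr h), if_pos h.le]; ring
  -- integrability of f and g on the product
  have hfP : Integrable (Function.uncurry f) muP := by
    have h1 : muP = ((volume : Measure (ℝ×ℝ))).restrict
        (Set.Ioc (0:ℝ) 1 ×ˢ Set.Ioc (0:ℝ) 1) := by
      rw [muP, Measure.prod_restrict, ← Measure.volume_eq_prod]
    rw [h1]
    exact hfint.mono_set (Set.prod_mono Set.Ioc_subset_Icc_self Set.Ioc_subset_Icc_self)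
  have hgP : Integrable (fun p : ℝ × ℝ => (ρ * π p.2 + (1 - ρ)) * f p.1 p.2) muP := by
    have := hfP.bdd_mul (c := ρ * M + |1 - ρ|)
      ((hhmeas.comp measurable_snd).aestronglyMeasurable)
      ((wP_snd hhae).mono fun p hp => by rwa [Real.norm_eq_abs])
    exact this
  have hsec : ∀ᵐ x ∂(volume.restrict (Set.Ioc (0:ℝ) 1)),
      Integrable (fun u => (ρ * π u + (1 - ρ)) * f x u) (volume.restrict (Set.Ioc (0:ℝ) 1)) := by
    filter_upwards [wP_sections hgP] with x hx
    exact hx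
  have hGfμ : Integrable (Gfm ρ π f) (volume.restrict (Set.Ioc (0:ℝ) 1)) := by
    have h := wP_int_left hgP
    beta_reduce at h
    unfold Gfm
    exact h
  set T : ℝ := ∫ p, (ρ * π p.2 + (1 - ρ)) * f p.1 p.2 ∂muP with hTdef
  have hGfT : (∫ x in Set.Ioc (0:ℝ) 1, Gfm ρ π f x) = T := by
    rw [hTdef]
    have h := (wP_prod hgP).symm
    beta_reduce at h
    unfold Gfm
    exact h
  have htarget : (∫ u in (0:ℝ)..1, ∫ x in (0:ℝ)..1, (ρ * π u + (1 - ρ)) * f x u) = T := by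
    rw [intervalIntegral.integral_of_le zero_le_one]
    simp only [intervalIntegral.integral_of_le zero_le_one]
    rw [hTdef]
    have h := (wP_symm hgP).symm
    beta_reduce at h
    exact h
  -- pointwise symmetrized identity
  have hkey : ∀ᵐ p ∂muP,
      (ρ * π p.2 + (1 - ρ)) * f p.1 p.2 + (ρ * π p.1 + (1 - ρ)) * f p.2 p.1
        = ρ * (Gfm ρ π f p.1 * π p.2) + ρ * (π p.1 * Gfm ρ π f p.2)
          + (lam * K₁ * α) * (π p.1 * Cfm ρ π p.1 p.2)
          + (lam * K₁ * α) * (π p.2 * Cfm ρ π p.2 p.1)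
          + (lam * K₁ * (ρ * B₂ / (2 * B₁)) * 2 + lam * K₁ * B₁ * (K₂ / K₁))
              * (π p.1 * π p.2) := by
    filter_upwards [wP_fst hsec, wP_snd hsec, wP_fst haemem, wP_snd haemem, wP_diag]
      with p hfx hfy hx hy hne
    obtain ⟨x, y⟩ := p
    simp only at hfx hfy hx hy hne ⊢
    have hxI : x ∈ Set.Icc (0:ℝ) 1 := Set.Ioc_subset_Icc_self hx
    have hyI : y ∈ Set.Icc (0:ℝ) 1 := Set.Ioc_subset_Icc_self hy
    have e1 := heq x hxI y hyI
    have e2 := heq y hyI x hxI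
    rw [hcinth x hxI y hyI] at e1
    rw [hcinth y hyI x hxI] at e2
    have hfun : (fun u => (ρ * π u + (1 - ρ)) * (π x * f y u + π y * f x u))
        = (fun u => (ρ * π u + (1 - ρ)) * (π y * f x u + π x * f y u)) := by
      funext u; ring
    rw [hfun] at e2
    have hint : IntegrableOn (fun u => (ρ * π u + (1 - ρ)) * (π y * f x u + π x * f y u))
        (Set.Ioc 0 1) := by
      have h1 : Integrable (fun u => π y * ((ρ * π u + (1 - ρ)) * f x u)
          + π x * ((ρ * π u + (1 - ρ)) * f y u)) (volume.restrict (Set.Ioc (0:ℝ) 1)) :=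
        (hfx.const_mul _).add (hfy.const_mul _)
      exact h1.congr (Filter.Eventually.of_forall fun u => by ring)
    have hconv := cint_add_cint hint hxI hyI hne
    have hval : (∫ u in (0:ℝ)..1, (ρ * π u + (1 - ρ)) * (π y * f x u + π x * f y u))
        = π y * Gfm ρ π f x + π x * Gfm ρ π f y := by
      rw [intervalIntegral.integral_of_le zero_le_one]
      have h2 : (∫ u in Set.Ioc (0:ℝ) 1, ((ρ * π u + (1 - ρ)) * (π y * f x u + π x * f y u)))
          = ∫ u in Set.Ioc (0:ℝ) 1, (π y * ((ρ * π u + (1 - ρ)) * f x u)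
              + π x * ((ρ * π u + (1 - ρ)) * f y u)) :=
        integral_congr_ae (Filter.Eventually.of_forall fun u => by ring)
      rw [h2, integral_add (hfx.const_mul _) (hfy.const_mul _), integral_const_mul,
        integral_const_mul]
      unfold Gfm
      rfl
    rw [hval] at hconv
    have hCs := hCsum x y hne
    linear_combination e1 + e2 + ρ * hconv + (lam * K₁ * B₁ * (K₂ / K₁) * (π x * π y)) * hCs
  -- bound for Cfm
  have hCbd : ∀ a b : ℝ, a ∈ Set.Ioc (0:ℝ) 1 → b ∈ Set.Ioc (0:ℝ) 1 →
      |Cfm ρ π a b| ≤ ρ * (2 * M) + |1 - ρ| + 1 := by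
    intro a b ha hb
    have h1 : |ρ * (Pim π b - Pim π a)| ≤ ρ * (2 * M) := by
      rw [abs_mul, abs_of_nonneg hρ0.le]
      have h3 := hPib a
      have h4 := hPib b
      rw [abs_le] at h3 h4
      have h5 : |Pim π b - Pim π a| ≤ 2 * M := by
        rw [abs_le]; constructor <;> linarith [h3.1, h3.2, h4.1, h4.2]
      nlinarith
    have h2 : |(1 - ρ) * (b - a)| ≤ |1 - ρ| := by
      rw [abs_mul]
      have h3 : |b - a| ≤ 1 := by
        rw [abs_le]
        constructor
        · linarith [ha.2, hb.1]
        · linarith [ha.1, hb.2]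
      nlinarith [abs_nonneg (1 - ρ)]
    have h3 : |(if a ≤ b then (0:ℝ) else 1)| ≤ 1 := by
      split <;> norm_num
    calc |Cfm ρ π a b|
        ≤ |ρ * (Pim π b - Pim π a) + (1 - ρ) * (b - a)| + |(if a ≤ b then (0:ℝ) else 1)| := by
          unfold Cfm; exact abs_add_le _ _
      _ ≤ |ρ * (Pim π b - Pim π a)| + |(1 - ρ) * (b - a)| + |(if a ≤ b then (0:ℝ) else 1)| := by
          have := abs_add_le (ρ * (Pim π b - Pim π a)) ((1 - ρ) * (b - a))
          linarith
      _ ≤ ρ * (2 * M) + |1 - ρ| + 1 := by linarith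
  -- integrability of the five pieces
  have hI1 : Integrable (fun p : ℝ × ℝ => Gfm ρ π f p.1 * π p.2) muP := wP_mul_int hGfμ hπμ
  have hI2 : Integrable (fun p : ℝ × ℝ => π p.1 * Gfm ρ π f p.2) muP := wP_mul_int hπμ hGfμ
  have hI3 : Integrable (fun p : ℝ × ℝ => π p.1 * Cfm ρ π p.1 p.2) muP := by
    refine wP_bint (C := M * (ρ * (2 * M) + |1 - ρ| + 1))
      ((hπmeas.comp measurable_fst).mul (Cfm_measurable hπmeas)).aestronglyMeasurable ?_
    filter_upwards [wP_fst haemem, wP_snd haemem, wP_fst hπae] with p h1 h2 h3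
    rw [abs_mul]
    exact mul_le_mul h3 (hCbd _ _ h1 h2) (abs_nonneg _) hM0
  have hI4 : Integrable (fun p : ℝ × ℝ => π p.2 * Cfm ρ π p.2 p.1) muP :=
    wP_swap_int2 hI3 (fun p => rfl)
  have hI5 : Integrable (fun p : ℝ × ℝ => π p.1 * π p.2) muP := wP_mul_int hπμ hπμ
  -- product integral values
  have hE1 : ∫ p, Gfm ρ π f p.1 * π p.2 ∂muP = T := by
    have h := wP_mul (Gfm ρ π f) π
    rw [hπ1, hGfT, mul_one] at h
    exact h
  have hE2 : ∫ p, π p.1 * Gfm ρ π f p.2 ∂muP = T := by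
    have h := wP_mul π (Gfm ρ π f)
    rw [hπ1, hGfT, one_mul] at h
    exact h
  have hE5 : ∫ p, π p.1 * π p.2 ∂muP = 1 := by
    have h := wP_mul π π
    rw [hπ1, mul_one] at h
    exact h
  -- ∫ π·Pim = 1/2
  have hππint : Integrable (fun t => π t * Pim π t) (volume.restrict (Set.Ioc (0:ℝ) 1)) :=
    w_bint ((hπmeas.mul hPimeas).aestronglyMeasurable)
      (hπae.mono fun u hu => by
        rw [abs_mul]; exact mul_le_mul hu (hPib u) (abs_nonneg _) hM0)
  have hV2 : (∫ t in Set.Ioc (0:ℝ) 1, π t * Pim π t) = 1/2 := by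
    have hDint : Integrable (fun p : ℝ × ℝ => π p.1 * (if p.2 ≤ p.1 then π p.2 else 0)) muP := by
      refine wP_bint (C := M * M)
        ((hπmeas.comp measurable_fst).mul
          (Measurable.ite (measurableSet_le measurable_snd measurable_fst)
            (hπmeas.comp measurable_snd) measurable_const)).aestronglyMeasurable ?_
      filter_upwards [wP_fst hπae, wP_snd hπae] with p h1 h2
      rw [abs_mul]
      refine mul_le_mul h1 ?_ (abs_nonneg _) hM0
      split
      · exact h2
      · simpa using hM0
    have hDswap : Integrable (fun p : ℝ × ℝ => π p.2 * (if p.1 ≤ p.2 then π p.1 else 0)) muP :=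
      wP_swap_int2 hDint (fun p => rfl)
    have h1 : ∫ p, π p.1 * (if p.2 ≤ p.1 then π p.2 else 0) ∂muP
        = ∫ t in Set.Ioc (0:ℝ) 1, π t * Pim π t := by
      rw [wP_prod hDint]
      refine integral_congr_ae (Filter.Eventually.of_forall fun x => ?_)
      show (∫ y in Set.Ioc (0:ℝ) 1, π x * (if y ≤ x then π y else 0)) = π x * Pim π x
      rw [integral_const_mul]
      simp only [Pim]
    have h2 : ∫ p, π p.1 * (if p.2 ≤ p.1 then π p.2 else 0) ∂muP
        = ∫ p, π p.2 * (if p.1 ≤ p.2 then π p.1 else 0) ∂muP :=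
      (wP_swap_eq (fun p : ℝ × ℝ => π p.1 * (if p.2 ≤ p.1 then π p.2 else 0))
        (fun p : ℝ × ℝ => π p.2 * (if p.1 ≤ p.2 then π p.1 else 0)) (fun p => rfl)).symm
    have h3 : ∫ p, (π p.1 * (if p.2 ≤ p.1 then π p.2 else 0)
          + π p.2 * (if p.1 ≤ p.2 then π p.1 else 0)) ∂muP
        = ∫ p, π p.1 * π p.2 ∂muP := by
      refine integral_congr_ae (wP_diag.mono fun p hne => ?_)
      beta_reduce
      rcases hne.lt_or_gt with h | h
      · rw [if_neg (not_le.mpr h), if_pos h.le]; ring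
      · rw [if_pos h.le, if_neg (not_le.mpr h)]; ring
    have h4 : ∫ p, (π p.1 * (if p.2 ≤ p.1 then π p.2 else 0)
          + π p.2 * (if p.1 ≤ p.2 then π p.1 else 0)) ∂muP
        = (∫ p, π p.1 * (if p.2 ≤ p.1 then π p.2 else 0) ∂muP)
          + ∫ p, π p.2 * (if p.1 ≤ p.2 then π p.1 else 0) ∂muP :=
      integral_add hDint hDswap
    linarith [h1, h2, h3, h4, hE5]
  -- ∫ t·π t = 1 - S
  have hV3 : (∫ t in Set.Ioc (0:ℝ) 1, π t * t) = 1 - S := by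
    have hD2int : Integrable (fun p : ℝ × ℝ => π p.1 * (if p.2 ≤ p.1 then (1:ℝ) else 0)) muP := by
      refine wP_bint (C := M * 1)
        ((hπmeas.comp measurable_fst).mul
          (Measurable.ite (measurableSet_le measurable_snd measurable_fst)
            measurable_const measurable_const)).aestronglyMeasurable ?_
      filter_upwards [wP_fst hπae] with p h1
      rw [abs_mul]
      refine mul_le_mul h1 ?_ (abs_nonneg _) hM0
      split <;> norm_num
    have hD3int : Integrable (fun p : ℝ × ℝ => (if p.2 ≤ p.1 then π p.2 else 0)) muP := by
      refine wP_bint (C := M)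
        (Measurable.ite (measurableSet_le measurable_snd measurable_fst)
          (hπmeas.comp measurable_snd) measurable_const).aestronglyMeasurable ?_
      filter_upwards [wP_snd hπae] with p h1
      split
      · exact h1
      · simpa using hM0
    have h1 : ∫ p, π p.1 * (if p.2 ≤ p.1 then (1:ℝ) else 0) ∂muP
        = ∫ t in Set.Ioc (0:ℝ) 1, π t * t := by
      rw [wP_prod hD2int]
      refine integral_congr_ae (haemem.mono fun x hx => ?_)
      show (∫ y in Set.Ioc (0:ℝ) 1, π x * (if y ≤ x then (1:ℝ) else 0)) = π x * x
      rw [integral_const_mul, ind_le_eq hx]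
    have h2 : ∫ p, π p.1 * (if p.2 ≤ p.1 then (1:ℝ) else 0) ∂muP
        = ∫ p, π p.2 * (if p.1 ≤ p.2 then (1:ℝ) else 0) ∂muP :=
      (wP_swap_eq (fun p : ℝ × ℝ => π p.1 * (if p.2 ≤ p.1 then (1:ℝ) else 0))
        (fun p : ℝ × ℝ => π p.2 * (if p.1 ≤ p.2 then (1:ℝ) else 0)) (fun p => rfl)).symm
    have h3 : ∫ p, (if p.2 ≤ p.1 then π p.2 else 0) ∂muP = S := by
      rw [wP_prod hD3int, hSdef]
      refine integral_congr_ae (Filter.Eventually.of_forall fun x => ?_)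
      show (∫ y in Set.Ioc (0:ℝ) 1, (if y ≤ x then π y else 0)) = Pim π x
      simp only [Pim]
    have h5 : ∫ p, π p.2 ∂muP = 1 := by
      have h := wP_mul (fun _ => (1:ℝ)) π
      simp only [one_mul] at h
      rw [hπ1, setIntegral_const, Real.volume_real_Ioc] at h
      norm_num at h
      exact h
    have h4 : ∫ p, (π p.2 * (if p.1 ≤ p.2 then (1:ℝ) else 0)
          + (if p.2 ≤ p.1 then π p.2 else 0)) ∂muP = ∫ p, π p.2 ∂muP := by
      refine integral_congr_ae (wP_diag.mono fun p hne => ?_)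
      beta_reduce
      rcases hne.lt_or_gt with h | h
      · rw [if_pos h.le, if_neg (not_le.mpr h)]; ring
      · rw [if_neg (not_le.mpr h), if_pos h.le]; ring
    have h6 : Integrable (fun p : ℝ × ℝ => π p.2 * (if p.1 ≤ p.2 then (1:ℝ) else 0)) muP :=
      wP_swap_int2 hD2int (fun p => rfl)
    have h7 : ∫ p, (π p.2 * (if p.1 ≤ p.2 then (1:ℝ) else 0)
          + (if p.2 ≤ p.1 then π p.2 else 0)) ∂muP
        = (∫ p, π p.2 * (if p.1 ≤ p.2 then (1:ℝ) else 0) ∂muP)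
          + ∫ p, (if p.2 ≤ p.1 then π p.2 else 0) ∂muP :=
      integral_add h6 hD3int
    linarith [h1, h2, h3, h4, h5, h7]
  -- main inner computation: E3 = 1/2
  have hidμ : Integrable (fun y : ℝ => y) (volume.restrict (Set.Ioc (0:ℝ) 1)) :=
    w_bint measurable_id.aestronglyMeasurable
      (haemem.mono fun u hu => abs_le.mpr ⟨by linarith [hu.1], hu.2⟩)
  have hE3 : ∫ p, π p.1 * Cfm ρ π p.1 p.2 ∂muP = 1/2 := by
    rw [wP_prod hI3]
    have hinner : ∀ᵐ x ∂(volume.restrict (Set.Ioc (0:ℝ) 1)),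
        (∫ y in Set.Ioc (0:ℝ) 1, π x * Cfm ρ π x y)
          = π x * (ρ * (S - Pim π x) + (1 - ρ) * (1/2 - x) + x) := by
      filter_upwards [haemem] with x hx
      rw [integral_const_mul]
      congr 1
      have c1 : Integrable (fun y => ρ * (Pim π y - Pim π x))
          (volume.restrict (Set.Ioc (0:ℝ) 1)) := (hPiμ.sub (integrable_const _)).const_mul ρ
      have c2 : Integrable (fun y => (1 - ρ) * (y - x))
          (volume.restrict (Set.Ioc (0:ℝ) 1)) := (hidμ.sub (integrable_const _)).const_mul _
      have c3 : Integrable (fun y => if x ≤ y then (0:ℝ) else 1)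
          (volume.restrict (Set.Ioc (0:ℝ) 1)) := by
        refine w_bint (C := 1) (Measurable.ite (measurableSet_le measurable_const measurable_id)
          measurable_const measurable_const).aestronglyMeasurable ?_
        refine Filter.Eventually.of_forall fun u => ?_
        split <;> norm_num
      have hsplit : (∫ y in Set.Ioc (0:ℝ) 1, Cfm ρ π x y)
          = (∫ y in Set.Ioc (0:ℝ) 1, (ρ * (Pim π y - Pim π x) + (1 - ρ) * (y - x)
              + (if x ≤ y then (0:ℝ) else 1))) :=
        integral_congr_ae (Filter.Eventually.of_forall fun y => by simp only [Cfm])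
      have hadd1 : (∫ y in Set.Ioc (0:ℝ) 1, (ρ * (Pim π y - Pim π x) + (1 - ρ) * (y - x)
              + (if x ≤ y then (0:ℝ) else 1)))
          = (∫ y in Set.Ioc (0:ℝ) 1, (ρ * (Pim π y - Pim π x) + (1 - ρ) * (y - x)))
            + ∫ y in Set.Ioc (0:ℝ) 1, (if x ≤ y then (0:ℝ) else 1) :=
        integral_add (c1.add c2) c3
      have hadd2 : (∫ y in Set.Ioc (0:ℝ) 1, (ρ * (Pim π y - Pim π x) + (1 - ρ) * (y - x)))
          = (∫ y in Set.Ioc (0:ℝ) 1, ρ * (Pim π y - Pim π x))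
            + ∫ y in Set.Ioc (0:ℝ) 1, (1 - ρ) * (y - x) := integral_add c1 c2
      rw [hsplit, hadd1, hadd2, integral_const_mul, integral_const_mul,
        integral_sub hPiμ (integrable_const _), integral_sub hidμ (integrable_const _),
        integral_const, integral_const, measureReal_def, hμuniv, ind_gt_eq hx, int_id_half, ← hSdef]
      simp only [smul_eq_mul, one_mul]
      all_goals ring
    have hstep : (∫ x in Set.Ioc (0:ℝ) 1, ∫ y in Set.Ioc (0:ℝ) 1, π x * Cfm ρ π x y)
        = ∫ x in Set.Ioc (0:ℝ) 1, π x * (ρ * (S - Pim π x) + (1 - ρ) * (1/2 - x) + x) :=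
      integral_congr_ae hinner
    have hπxint : Integrable (fun x => π x * x) (volume.restrict (Set.Ioc (0:ℝ) 1)) := by
      refine w_bint (C := M * 1) ((hπmeas.mul measurable_id).aestronglyMeasurable) ?_
      filter_upwards [hπae, haemem] with u hu hmem
      rw [abs_mul]
      exact mul_le_mul hu (abs_le.mpr ⟨by linarith [hmem.1], hmem.2⟩) (abs_nonneg _) hM0
    have d1 : Integrable (fun x => (ρ * S + (1 - ρ) * (1/2)) * π x)
        (volume.restrict (Set.Ioc (0:ℝ) 1)) := hπμ.const_mul _
    have d2 : Integrable (fun x => ρ * (π x * Pim π x))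
        (volume.restrict (Set.Ioc (0:ℝ) 1)) := hππint.const_mul ρ
    have d3 : Integrable (fun x => ρ * (π x * x))
        (volume.restrict (Set.Ioc (0:ℝ) 1)) := hπxint.const_mul ρ
    have hre : (∫ x in Set.Ioc (0:ℝ) 1, π x * (ρ * (S - Pim π x) + (1 - ρ) * (1/2 - x) + x))
        = ∫ x in Set.Ioc (0:ℝ) 1, ((ρ * S + (1 - ρ) * (1/2)) * π x - ρ * (π x * Pim π x)
            + ρ * (π x * x)) :=
      integral_congr_ae (Filter.Eventually.of_forall fun x => by ring)
    have hadd3 : (∫ x in Set.Ioc (0:ℝ) 1, ((ρ * S + (1 - ρ) * (1/2)) * π x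
            - ρ * (π x * Pim π x) + ρ * (π x * x)))
        = ((∫ x in Set.Ioc (0:ℝ) 1, (ρ * S + (1 - ρ) * (1/2)) * π x)
            - ∫ x in Set.Ioc (0:ℝ) 1, ρ * (π x * Pim π x))
          + ∫ x in Set.Ioc (0:ℝ) 1, ρ * (π x * x) := by
      rw [← integral_sub d1 d2]
      exact integral_add (d1.sub d2) d3
    have hb : (∫ x in Set.Ioc (0:ℝ) 1, π x * Pim π x) = 1/2 := hV2
    rw [hstep, hre, hadd3, integral_const_mul, integral_const_mul, integral_const_mul,
      hπ1, hb, hV3]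
    ring
  have hE4 : ∫ p, π p.2 * Cfm ρ π p.2 p.1 ∂muP = 1/2 := by
    rw [wP_swap_eq (fun p : ℝ × ℝ => π p.1 * Cfm ρ π p.1 p.2)
      (fun p : ℝ × ℝ => π p.2 * Cfm ρ π p.2 p.1) (fun p => rfl)]
    exact hE3
  -- integrate the key identity
  have hswint : Integrable (fun p : ℝ × ℝ => (ρ * π p.1 + (1 - ρ)) * f p.2 p.1) muP :=
    wP_swap_int2 hgP (fun p => rfl)
  have hswval : ∫ p, (ρ * π p.1 + (1 - ρ)) * f p.2 p.1 ∂muP = T := by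
    rw [hTdef]
    exact wP_swap_eq (fun p : ℝ × ℝ => (ρ * π p.2 + (1 - ρ)) * f p.1 p.2)
      (fun p : ℝ × ℝ => (ρ * π p.1 + (1 - ρ)) * f p.2 p.1) (fun p => rfl)
  have hLHSadd : ∫ p, ((ρ * π p.2 + (1 - ρ)) * f p.1 p.2
        + (ρ * π p.1 + (1 - ρ)) * f p.2 p.1) ∂muP
      = (∫ p, (ρ * π p.2 + (1 - ρ)) * f p.1 p.2 ∂muP)
        + ∫ p, (ρ * π p.1 + (1 - ρ)) * f p.2 p.1 ∂muP := integral_add hgP hswint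
  have hLHS : ∫ p, ((ρ * π p.2 + (1 - ρ)) * f p.1 p.2
        + (ρ * π p.1 + (1 - ρ)) * f p.2 p.1) ∂muP = T + T := by
    rw [hLHSadd, hswval, ← hTdef]
  -- right-hand side split
  have j1 : Integrable (fun p : ℝ × ℝ => ρ * (Gfm ρ π f p.1 * π p.2)) muP := hI1.const_mul ρ
  have j2 : Integrable (fun p : ℝ × ℝ => ρ * (π p.1 * Gfm ρ π f p.2)) muP := hI2.const_mul ρ
  have j3 : Integrable (fun p : ℝ × ℝ => (lam * K₁ * α) * (π p.1 * Cfm ρ π p.1 p.2)) muP :=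
    hI3.const_mul _
  have j4 : Integrable (fun p : ℝ × ℝ => (lam * K₁ * α) * (π p.2 * Cfm ρ π p.2 p.1)) muP :=
    hI4.const_mul _
  have j5 : Integrable (fun p : ℝ × ℝ =>
      (lam * K₁ * (ρ * B₂ / (2 * B₁)) * 2 + lam * K₁ * B₁ * (K₂ / K₁)) * (π p.1 * π p.2)) muP :=
    hI5.const_mul _
  have u1 : ∫ p, (ρ * (Gfm ρ π f p.1 * π p.2) + ρ * (π p.1 * Gfm ρ π f p.2)) ∂muP
      = (∫ p, ρ * (Gfm ρ π f p.1 * π p.2) ∂muP) + ∫ p, ρ * (π p.1 * Gfm ρ π f p.2) ∂muP :=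
    integral_add j1 j2
  have u2 : ∫ p, (ρ * (Gfm ρ π f p.1 * π p.2) + ρ * (π p.1 * Gfm ρ π f p.2)
        + (lam * K₁ * α) * (π p.1 * Cfm ρ π p.1 p.2)) ∂muP
      = (∫ p, (ρ * (Gfm ρ π f p.1 * π p.2) + ρ * (π p.1 * Gfm ρ π f p.2)) ∂muP)
        + ∫ p, (lam * K₁ * α) * (π p.1 * Cfm ρ π p.1 p.2) ∂muP :=
    integral_add (j1.add j2) j3
  have u3 : ∫ p, (ρ * (Gfm ρ π f p.1 * π p.2) + ρ * (π p.1 * Gfm ρ π f p.2)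
        + (lam * K₁ * α) * (π p.1 * Cfm ρ π p.1 p.2)
        + (lam * K₁ * α) * (π p.2 * Cfm ρ π p.2 p.1)) ∂muP
      = (∫ p, (ρ * (Gfm ρ π f p.1 * π p.2) + ρ * (π p.1 * Gfm ρ π f p.2)
          + (lam * K₁ * α) * (π p.1 * Cfm ρ π p.1 p.2)) ∂muP)
        + ∫ p, (lam * K₁ * α) * (π p.2 * Cfm ρ π p.2 p.1) ∂muP :=
    integral_add ((j1.add j2).add j3) j4
  have u4 : ∫ p, (ρ * (Gfm ρ π f p.1 * π p.2) + ρ * (π p.1 * Gfm ρ π f p.2)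
        + (lam * K₁ * α) * (π p.1 * Cfm ρ π p.1 p.2)
        + (lam * K₁ * α) * (π p.2 * Cfm ρ π p.2 p.1)
        + (lam * K₁ * (ρ * B₂ / (2 * B₁)) * 2 + lam * K₁ * B₁ * (K₂ / K₁))
            * (π p.1 * π p.2)) ∂muP
      = (∫ p, (ρ * (Gfm ρ π f p.1 * π p.2) + ρ * (π p.1 * Gfm ρ π f p.2)
          + (lam * K₁ * α) * (π p.1 * Cfm ρ π p.1 p.2)
          + (lam * K₁ * α) * (π p.2 * Cfm ρ π p.2 p.1)) ∂muP)
        + ∫ p, (lam * K₁ * (ρ * B₂ / (2 * B₁)) * 2 + lam * K₁ * B₁ * (K₂ / K₁))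
            * (π p.1 * π p.2) ∂muP :=
    integral_add (((j1.add j2).add j3).add j4) j5
  have v1 : ∫ p, ρ * (Gfm ρ π f p.1 * π p.2) ∂muP = ρ * T := by
    rw [integral_const_mul, hE1]
  have v2 : ∫ p, ρ * (π p.1 * Gfm ρ π f p.2) ∂muP = ρ * T := by
    rw [integral_const_mul, hE2]
  have v3 : ∫ p, (lam * K₁ * α) * (π p.1 * Cfm ρ π p.1 p.2) ∂muP = (lam * K₁ * α) * (1/2) := by
    rw [integral_const_mul, hE3]
  have v4 : ∫ p, (lam * K₁ * α) * (π p.2 * Cfm ρ π p.2 p.1) ∂muP = (lam * K₁ * α) * (1/2) := by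
    rw [integral_const_mul, hE4]
  have v5 : ∫ p, (lam * K₁ * (ρ * B₂ / (2 * B₁)) * 2 + lam * K₁ * B₁ * (K₂ / K₁))
      * (π p.1 * π p.2) ∂muP
      = lam * K₁ * (ρ * B₂ / (2 * B₁)) * 2 + lam * K₁ * B₁ * (K₂ / K₁) := by
    rw [integral_const_mul, hE5, mul_one]
  have hcongr : ∫ p, ((ρ * π p.2 + (1 - ρ)) * f p.1 p.2
        + (ρ * π p.1 + (1 - ρ)) * f p.2 p.1) ∂muP
      = ∫ p, (ρ * (Gfm ρ π f p.1 * π p.2) + ρ * (π p.1 * Gfm ρ π f p.2)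
          + (lam * K₁ * α) * (π p.1 * Cfm ρ π p.1 p.2)
          + (lam * K₁ * α) * (π p.2 * Cfm ρ π p.2 p.1)
          + (lam * K₁ * (ρ * B₂ / (2 * B₁)) * 2 + lam * K₁ * B₁ * (K₂ / K₁))
              * (π p.1 * π p.2)) ∂muP :=
    integral_congr_ae hkey
  have hmain : T + T = ρ * T + ρ * T + (lam * K₁ * α) * (1/2) + (lam * K₁ * α) * (1/2)
      + (lam * K₁ * (ρ * B₂ / (2 * B₁)) * 2 + lam * K₁ * B₁ * (K₂ / K₁)) := by
    rw [← hLHS, hcongr, u4, u3, u2, u1, v1, v2, v3, v4, v5]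
  -- final algebra
  rw [htarget]
  have hB₁' : B₁ ≠ 0 := ne_of_gt hB₁
  have hK₁' : K₁ ≠ 0 := ne_of_gt hK₁
  have h1ρ : (1:ℝ) - ρ ≠ 0 := by intro h; rw [sub_eq_zero] at h; exact absurd h.symm (ne_of_lt hρ1)
  rw [hρdef] at hmain ⊢
  have h1ρ' : lam * K₁ * B₁ < 1 := by rw [← hρdef]; exact hρ1
  have hms : lam * K₁ * (lam * K₁ * B₁ * B₂ / (2 * B₁)) * 2 = lam * K₁ * (lam * K₁ * B₂) := by
    field_simp
  have hms2 : lam * K₁ * B₁ * (K₂ / K₁) = lam * B₁ * K₂ := by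
    field_simp
  rw [hms, hms2] at hmain
  have hpos : (2 * (1 - lam * K₁ * B₁)) ≠ 0 := by
    have : (0:ℝ) < 2 * (1 - lam * K₁ * B₁) := by linarith
    exact ne_of_gt this
  rw [div_mul_eq_mul_div, eq_div_iff hpos]
  have hms4 : lam * K₁ * (α + lam * K₁ * B₂ + B₁ * K₂ / K₁)
      = lam * K₁ * α + lam * K₁ * (lam * K₁ * B₂) + lam * B₁ * K₂ := by
    field_simp
  rw [hms4]
  linear_combination hmain
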